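/- Let n ≥ 1 and R = C[x1,…,x_{2n+1}] ⊗ Λ(η1,…,η_{2n+1}). Define D12 = ∂_{x_{2n+1}}∂_{η_{2n+1}} + Σ_{i=1}^{n}(∂_{x_i}∂_{η_{2n+1−i}} − ∂_{x_{2n+1−i}}∂_{η_i}). For d ≥ 0 and ℓ > 1, the vector ω̃_{d,n+ℓ} = x1^d x_{2n+1}^ℓ Γ([n]) − ℓ x1^d x_{2n+1}^{ℓ−1} η_{2n+1} η_1⋯η_n satisfies D12 ω̃_{d,n+ℓ} = −ℓ(ℓ−1) x1^d x_{2n+1}^{ℓ−2} η_1⋯η_n ≠ 0. In particular ω̃_{d,n+ℓ} is not D12-harmonic for ℓ ≥ 2. -/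

import Mathlib

open scoped TensorProduct

noncomputable section

/-- Polynomial part `ℂ[x₁,…,x_m]`. -/
abbrev PolyPart (m : ℕ) := MvPolynomial (Fin m) ℂ

/-- Exterior part `Λ(η₁,…,η_m)`. -/
abbrev ExtPart (m : ℕ) := ExteriorAlgebra ℂ (Fin m → ℂ)

/-- The supersymmetric algebra `R = ℂ[x₁,…,x_m] ⊗ Λ(η₁,…,η_m)`. -/
abbrev SAlg (m : ℕ) := PolyPart m ⊗[ℂ] ExtPart m

/-- The even generator `x_i`. -/
def Xv {m : ℕ} (i : Fin m) : SAlg m := (MvPolynomial.X i) ⊗ₜ[ℂ] 1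

/-- The odd generator `η_i`. -/
def ηv {m : ℕ} (i : Fin m) : SAlg m :=
  1 ⊗ₜ[ℂ] (ExteriorAlgebra.ι ℂ (Pi.single i 1))

/-- The partial derivative `∂_{x_i}` (acting on the polynomial factor). -/
def dX {m : ℕ} (i : Fin m) : SAlg m →ₗ[ℂ] SAlg m :=
  LinearMap.rTensor (ExtPart m) (MvPolynomial.pderiv i).toLinearMap

/-- The odd left superderivation `∂_{η_i}` with `∂_{η_i}(η_j) = δ_{ij}`, realized as
left contraction of the exterior factor with the `i`-th coordinate functional. -/
def dη {m : ℕ} (i : Fin m) : SAlg m →ₗ[ℂ] SAlg m :=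
  LinearMap.lTensor (PolyPart m)
    (CliffordAlgebra.contractLeft (LinearMap.proj i : (Fin m → ℂ) →ₗ[ℂ] ℂ))

/-- Multiplication by `x_i`. -/
def mX {m : ℕ} (i : Fin m) : SAlg m →ₗ[ℂ] SAlg m := LinearMap.mulLeft ℂ (Xv i)

/-- Multiplication by `η_i`. -/
def mη {m : ℕ} (i : Fin m) : SAlg m →ₗ[ℂ] SAlg m := LinearMap.mulLeft ℂ (ηv i)

/-- Ordered product `η_{i₁}⋯η_{i_r}` over a list of indices. -/
def ηProdList {m : ℕ} (l : List (Fin m)) : SAlg m := (l.map ηv).prod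

/-- The product `η₁η₂⋯η_k` of the first `k` odd generators. -/
def ηTake (m k : ℕ) : SAlg m := ηProdList ((List.finRange m).take k)

/-- `Γ([k]) = Σ_{j=1}^{k} (−1)^{j−1} x_j η₁⋯η̂_j⋯η_k` (0-indexed internally). -/
def GammaK (m k : ℕ) : SAlg m :=
  ∑ j ∈ Finset.range k,
    if h : j < m then
      ((-1 : ℂ) ^ j) •
        (Xv ⟨j, h⟩ *
          ηProdList (((List.finRange m).take k).filter (fun a => (a : ℕ) ≠ j)))
    else 0

/-- `D₁₂ = ∂_{x_{2n+1}}∂_{η_{2n+1}} + Σ_{i=1}^{n}(∂_{x_i}∂_{η_{2n+1−i}} − ∂_{x_{2n+1−i}}∂_{η_i})`. -/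
def D12g (n : ℕ) : SAlg (2*n+1) →ₗ[ℂ] SAlg (2*n+1) :=
  dX (Fin.last (2*n)) ∘ₗ dη (Fin.last (2*n)) +
    ∑ i : Fin n,
      (dX ⟨i.1, by have := i.2; omega⟩ ∘ₗ dη ⟨2*n-1-i.1, by omega⟩ -
       dX ⟨2*n-1-i.1, by omega⟩ ∘ₗ dη ⟨i.1, by have := i.2; omega⟩)

/-- `D₂₂ = ∂_{x_{2n+1}}² + 2Σ_{i=1}^{n}∂_{η_i}∂_{η_{2n+1−i}}`. -/
def D22g (n : ℕ) : SAlg (2*n+1) →ₗ[ℂ] SAlg (2*n+1) :=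
  dX (Fin.last (2*n)) ∘ₗ dX (Fin.last (2*n)) +
    (2 : ℂ) • ∑ i : Fin n,
      dη ⟨i.1, by have := i.2; omega⟩ ∘ₗ dη ⟨2*n-1-i.1, by omega⟩

/-- The vector `ω̃_{d,n+ℓ} = x₁^d x_{2n+1}^ℓ Γ([n]) − ℓ x₁^d x_{2n+1}^{ℓ−1} η_{2n+1} η₁⋯η_n`. -/
def omegaTilde (n d l : ℕ) : SAlg (2*n+1) :=
  (Xv (⟨0, by omega⟩ : Fin (2*n+1))) ^ d * (Xv (Fin.last (2*n))) ^ l * GammaK (2*n+1) n -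
    (l : ℂ) • ((Xv (⟨0, by omega⟩ : Fin (2*n+1))) ^ d * (Xv (Fin.last (2*n))) ^ (l - 1) *
      ηv (Fin.last (2*n)) * ηTake (2*n+1) n)

/-! ### Auxiliary material -/

open MvPolynomial CliffordAlgebra

/-- Exterior product of basis vectors over a list of indices. -/
def eP {m : ℕ} (L : List (Fin m)) : ExtPart m :=
  (L.map (fun i => ExteriorAlgebra.ι ℂ (Pi.single i (1:ℂ)))).prod

lemma eP_nil {m : ℕ} : eP ([] : List (Fin m)) = 1 := rfl

lemma eP_cons {m : ℕ} (a : Fin m) (t : List (Fin m)) :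
    eP (a :: t) = ExteriorAlgebra.ι ℂ (Pi.single a (1:ℂ)) * eP t := by
  simp [eP]

lemma proj_single {m : ℕ} (k a : Fin m) :
    (LinearMap.proj k : (Fin m → ℂ) →ₗ[ℂ] ℂ) (Pi.single a 1) = if a = k then 1 else 0 := by
  by_cases h : a = k
  · subst h; simp
  · simp [h, Pi.single_eq_of_ne h]

lemma contract_eP_of_not_mem {m : ℕ} (k : Fin m) (L : List (Fin m)) (h : k ∉ L) :
    contractLeft (LinearMap.proj k : (Fin m → ℂ) →ₗ[ℂ] ℂ) (eP L) = 0 := by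
  induction L with
  | nil => simpa [eP_nil] using contractLeft_one
  | cons a t ih =>
    have ha : a ≠ k := fun e => h (e ▸ (List.mem_cons_self : a ∈ a :: t))
    rw [eP_cons, contractLeft_ι_mul, proj_single,
      ih (fun hm => h (List.mem_cons_of_mem _ hm))]
    simp [ha]

lemma contract_eP_head {m : ℕ} (a : Fin m) (t : List (Fin m)) (h : a ∉ t) :
    contractLeft (LinearMap.proj a : (Fin m → ℂ) →ₗ[ℂ] ℂ) (eP (a :: t)) = eP t := by
  rw [eP_cons, contractLeft_ι_mul, contract_eP_of_not_mem a t h, proj_single]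
  simp

lemma dX_tmul {m : ℕ} (i : Fin m) (p : PolyPart m) (e : ExtPart m) :
    dX i (p ⊗ₜ[ℂ] e) = (pderiv i p) ⊗ₜ[ℂ] e := rfl

lemma dη_tmul {m : ℕ} (i : Fin m) (p : PolyPart m) (e : ExtPart m) :
    dη i (p ⊗ₜ[ℂ] e) = p ⊗ₜ[ℂ]
      (contractLeft (LinearMap.proj i : (Fin m → ℂ) →ₗ[ℂ] ℂ) e) := rfl

lemma ηProdList_eq {m : ℕ} (L : List (Fin m)) : ηProdList L = 1 ⊗ₜ[ℂ] eP L := by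
  induction L with
  | nil => simp [ηProdList, eP_nil, Algebra.TensorProduct.one_def]
  | cons a t ih =>
    rw [ηProdList, List.map_cons, List.prod_cons, ← ηProdList, ih, eP_cons, ηv,
      Algebra.TensorProduct.tmul_mul_tmul, one_mul]

lemma mem_take_lt {m k : ℕ} (a : Fin m) (ha : a ∈ (List.finRange m).take k) : a.1 < k := by
  obtain ⟨i, hi, rfl⟩ := List.mem_iff_getElem.1 ha
  have h1 : i < k := by
    have := hi
    simp [List.length_take] at this
    omega
  simp [List.getElem_take]
  omega

lemma Xv_pow {m : ℕ} (i : Fin m) (d : ℕ) :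
    (Xv i) ^ d = ((X i : PolyPart m) ^ d) ⊗ₜ[ℂ] 1 := by
  rw [Xv, Algebra.TensorProduct.tmul_pow, one_pow]

lemma D12g_tmul_special (n : ℕ) (p : PolyPart (2*n+1)) (e : ExtPart (2*n+1))
    (he : ∀ k : Fin (2*n+1), n ≤ k.1 → k.1 < 2*n →
        contractLeft (LinearMap.proj k : (Fin (2*n+1) → ℂ) →ₗ[ℂ] ℂ) e = 0)
    (hp : ∀ k : Fin (2*n+1), n ≤ k.1 → k.1 < 2*n → pderiv k p = 0) :
    D12g n (p ⊗ₜ[ℂ] e)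
      = (pderiv (Fin.last (2*n) : Fin (2*n+1)) p) ⊗ₜ[ℂ]
          (contractLeft (LinearMap.proj (Fin.last (2*n) : Fin (2*n+1)) :
            (Fin (2*n+1) → ℂ) →ₗ[ℂ] ℂ) e) := by
  have hz : ∀ i : Fin n,
      ((dX (⟨i.1, by have := i.2; omega⟩ : Fin (2*n+1)) ∘ₗ
          dη (⟨2*n-1-i.1, by omega⟩ : Fin (2*n+1)) -
        dX (⟨2*n-1-i.1, by omega⟩ : Fin (2*n+1)) ∘ₗ
          dη (⟨i.1, by have := i.2; omega⟩ : Fin (2*n+1)) :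
        SAlg (2*n+1) →ₗ[ℂ] SAlg (2*n+1))) (p ⊗ₜ[ℂ] e) = 0 := by
    intro i
    have hc := he ⟨2*n-1-i.1, by omega⟩ (by have := i.2; simp; omega)
      (by have := i.2; simp; omega)
    have hd := hp ⟨2*n-1-i.1, by omega⟩ (by have := i.2; simp; omega)
      (by have := i.2; simp; omega)
    simp [LinearMap.sub_apply, LinearMap.comp_apply, dη_tmul, dX_tmul, hc, hd]
  rw [D12g, LinearMap.add_apply, LinearMap.sum_apply]
  rw [Finset.sum_congr rfl (fun i _ => hz i)]
  simp [LinearMap.comp_apply, dη_tmul, dX_tmul]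

lemma tmul_eP_ne_zero {m : ℕ} (p : PolyPart m) (hp : p ≠ 0) :
    ∀ L : List (Fin m), L.Nodup → p ⊗ₜ[ℂ] eP L ≠ 0 := by
  intro L
  induction L with
  | nil =>
    intro _ h
    rw [eP_nil] at h
    set f : SAlg m →ₗ[ℂ] PolyPart m :=
      (TensorProduct.rid ℂ (PolyPart m)).toLinearMap ∘ₗ
        LinearMap.lTensor (PolyPart m)
          (ExteriorAlgebra.algebraMapInv : ExtPart m →ₐ[ℂ] ℂ).toLinearMap with hf
    have h2 : f (p ⊗ₜ[ℂ] (1 : ExtPart m)) = 0 := by rw [h, map_zero]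
    have h3 : f (p ⊗ₜ[ℂ] (1 : ExtPart m)) = p := by
      rw [hf, LinearMap.comp_apply, LinearMap.lTensor_tmul]
      simp
    exact hp (h3 ▸ h2)
  | cons a t ih =>
    intro hnd h
    have h2 := congrArg (dη a) h
    rw [dη_tmul, contract_eP_head a t (List.nodup_cons.1 hnd).1, map_zero] at h2
    exact ih (List.nodup_cons.1 hnd).2 h2

set_option maxHeartbeats 1000000 in
set_option synthInstance.maxHeartbeats 400000 in
/-- for `n ≥ 1`, `d ≥ 0` and `ℓ > 1`,
`D₁₂ ω̃_{d,n+ℓ} = −ℓ(ℓ−1) x₁^d x_{2n+1}^{ℓ−2} η₁⋯η_n ≠ 0`;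
in particular `ω̃_{d,n+ℓ}` is not `D₁₂`-harmonic. -/
theorem stmt8 (n d l : ℕ) (hn : 1 ≤ n) (hl : 1 < l) :
    D12g n (omegaTilde n d l)
      = (-((l : ℂ) * ((l : ℂ) - 1))) •
          ((Xv (⟨0, by omega⟩ : Fin (2*n+1))) ^ d * (Xv (Fin.last (2*n))) ^ (l - 2) *
            ηTake (2*n+1) n) ∧
    D12g n (omegaTilde n d l) ≠ 0 := by
  have hmemL : ∀ a ∈ (List.finRange (2*n+1)).take n, a.1 < n := fun a ha => mem_take_lt a ha
  have key : D12g n (omegaTilde n d l) =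
      (-((l:ℂ) * ((l:ℂ) - 1))) •
        (((X (⟨0, by omega⟩ : Fin (2*n+1)) : PolyPart (2*n+1)) ^ d *
          (X (Fin.last (2*n)) : PolyPart (2*n+1)) ^ (l-2)) ⊗ₜ[ℂ]
          eP ((List.finRange (2*n+1)).take n)) := by
    have hA : D12g n ((Xv (⟨0, by omega⟩ : Fin (2*n+1)))^d * (Xv (Fin.last (2*n)))^l *
        GammaK (2*n+1) n) = 0 := by
      unfold GammaK
      rw [Finset.mul_sum, map_sum]
      apply Finset.sum_eq_zero
      intro j hj
      have hjn : j < n := Finset.mem_range.1 hj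
      set L : List (Fin (2*n+1)) :=
        ((List.finRange (2*n+1)).take n).filter (fun a => (a:ℕ) ≠ j) with hLdef
      have hmemL' : ∀ a ∈ L, a.1 < n := fun a ha => hmemL a (List.mem_filter.1 ha).1
      have hhe : ∀ k : Fin (2*n+1), n ≤ k.1 → k.1 < 2*n →
          contractLeft (LinearMap.proj k : (Fin (2*n+1) → ℂ) →ₗ[ℂ] ℂ) (eP L) = 0 := by
        intro k hk _
        exact contract_eP_of_not_mem _ _ (fun hm => absurd (hmemL' k hm) (by omega))
      have hhp : ∀ k : Fin (2*n+1), n ≤ k.1 → k.1 < 2*n →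
          pderiv k ((X (⟨0, by omega⟩ : Fin (2*n+1)))^d * (X (Fin.last (2*n)))^l *
            X (⟨j, by omega⟩ : Fin (2*n+1)) : PolyPart (2*n+1)) = 0 := by
        intro k hk1 hk2
        have h1 : (⟨0, by omega⟩ : Fin (2*n+1)) ≠ k := Fin.ne_of_val_ne (by simp; omega)
        have h0 : (0 : Fin (2*n+1)) ≠ k := Fin.ne_of_val_ne (by simp; omega)
        have h2 : (Fin.last (2*n) : Fin (2*n+1)) ≠ k :=
          Fin.ne_of_val_ne (by simp [Fin.val_last]; omega)
        have h3 : (⟨j, by omega⟩ : Fin (2*n+1)) ≠ k := Fin.ne_of_val_ne (by simp; omega)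
        simp [pderiv_mul, pderiv_pow, pderiv_X_of_ne h1, pderiv_X_of_ne h2,
          pderiv_X_of_ne h3, Pi.single_eq_of_ne h0, Pi.single_eq_of_ne h2,
          Pi.single_eq_of_ne h3]
      rw [dif_pos (show j < 2*n+1 by omega), ηProdList_eq]
      simp only [Xv_pow, Xv, Algebra.TensorProduct.tmul_pow, one_pow,
        Algebra.TensorProduct.tmul_mul_tmul, one_mul, mul_one, mul_smul_comm, map_smul]
      rw [D12g_tmul_special n _ _ hhe hhp]
      rw [contract_eP_of_not_mem _ _ (fun hm => by
        have := hmemL' _ hm; simp [Fin.val_last] at this; omega)]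
      rw [TensorProduct.tmul_zero, smul_zero]
    have hB : D12g n ((Xv (⟨0, by omega⟩ : Fin (2*n+1)))^d * (Xv (Fin.last (2*n)))^(l-1) *
        ηv (Fin.last (2*n)) * ηTake (2*n+1) n)
        = (((l-1:ℕ):ℂ)) •
          ((((X (⟨0, by omega⟩ : Fin (2*n+1)) : PolyPart (2*n+1)))^d *
            (X (Fin.last (2*n)) : PolyPart (2*n+1))^(l-2)) ⊗ₜ[ℂ]
            eP ((List.finRange (2*n+1)).take n)) := by
      have hnotmem : (Fin.last (2*n) : Fin (2*n+1)) ∉ (List.finRange (2*n+1)).take n :=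
        fun hm => by have := hmemL _ hm; simp [Fin.val_last] at this; omega
      have hhe : ∀ k : Fin (2*n+1), n ≤ k.1 → k.1 < 2*n →
          contractLeft (LinearMap.proj k : (Fin (2*n+1) → ℂ) →ₗ[ℂ] ℂ)
            (ExteriorAlgebra.ι ℂ (Pi.single (Fin.last (2*n) : Fin (2*n+1)) (1:ℂ)) *
              eP ((List.finRange (2*n+1)).take n)) = 0 := by
        intro k hk1 hk2
        have hne : ¬ ((Fin.last (2*n) : Fin (2*n+1)) = k) :=
          Fin.ne_of_val_ne (by simp [Fin.val_last]; omega)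
        rw [contractLeft_ι_mul, proj_single,
          contract_eP_of_not_mem _ _ (fun hm => absurd (hmemL _ hm) (by omega)), if_neg hne]
        simp
      have hhp : ∀ k : Fin (2*n+1), n ≤ k.1 → k.1 < 2*n →
          pderiv k ((X (⟨0, by omega⟩ : Fin (2*n+1)))^d * (X (Fin.last (2*n)))^(l-1) :
            PolyPart (2*n+1)) = 0 := by
        intro k hk1 hk2
        have h1 : (⟨0, by omega⟩ : Fin (2*n+1)) ≠ k := Fin.ne_of_val_ne (by simp; omega)
        have h0 : (0 : Fin (2*n+1)) ≠ k := Fin.ne_of_val_ne (by simp; omega)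
        have h2 : (Fin.last (2*n) : Fin (2*n+1)) ≠ k :=
          Fin.ne_of_val_ne (by simp [Fin.val_last]; omega)
        simp [pderiv_mul, pderiv_pow, pderiv_X_of_ne h1, pderiv_X_of_ne h2,
          Pi.single_eq_of_ne h0, Pi.single_eq_of_ne h2]
      rw [ηTake, ηProdList_eq, ηv]
      simp only [Xv_pow, Xv, Algebra.TensorProduct.tmul_pow, one_pow,
        Algebra.TensorProduct.tmul_mul_tmul, one_mul, mul_one]
      rw [D12g_tmul_special n _ _ hhe hhp]
      rw [contractLeft_ι_mul, proj_single, if_pos rfl,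
        contract_eP_of_not_mem _ _ hnotmem]
      have h01 : (⟨0, by omega⟩ : Fin (2*n+1)) ≠ (Fin.last (2*n) : Fin (2*n+1)) :=
        Fin.ne_of_val_ne (by simp [Fin.val_last]; omega)
      rw [pderiv_mul, pderiv_pow, pderiv_pow, pderiv_X_of_ne h01, pderiv_X_self]
      have e1 : l - 1 - 1 = l - 2 := by omega
      simp only [mul_zero, zero_mul, zero_add, mul_one, one_smul, sub_zero, e1]
      rw [TensorProduct.smul_tmul', MvPolynomial.smul_eq_C_mul, map_natCast]
      congr 1
      ring
    unfold omegaTilde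
    rw [map_sub, map_smul, hA, hB, zero_sub, smul_smul, ← neg_smul]
    congr 1
    rw [Nat.cast_sub (by omega : 1 ≤ l)]
    push_cast
    ring
  constructor
  · rw [key]
    congr 1
    rw [ηTake, ηProdList_eq]
    simp only [Xv_pow, Xv, Algebra.TensorProduct.tmul_pow, one_pow,
      Algebra.TensorProduct.tmul_mul_tmul, one_mul, mul_one]
  · rw [key]
    refine smul_ne_zero ?_ (tmul_eP_ne_zero _ ?_ _ ?_)
    · have h1 : (l:ℂ) ≠ 0 := Nat.cast_ne_zero.2 (by omega)
      have h2 : (l:ℂ) - 1 ≠ 0 := sub_ne_zero.2 (by exact_mod_cast (by omega : l ≠ 1))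
      exact neg_ne_zero.2 (mul_ne_zero h1 h2)
    · exact mul_ne_zero (pow_ne_zero _ (MvPolynomial.X_ne_zero _))
        (pow_ne_zero _ (MvPolynomial.X_ne_zero _))
    · exact (List.take_sublist _ _).nodup (List.nodup_finRange _)
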